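/- Let c be a positive integer and G a finite undirected graph on n vertices, and let q_c denote the number of c-edge-connected components of G. Then the number of edges of G whose two endpoints lie in distinct c-edge-connected components of G is at most (c-1)(q_c - 1). -/

import Mathlib

open SimpleGraph

/-- The set of edges of `G` with exactly one endpoint in `A`: the edges of the
cut `(A, Aᶜ)`, also known as the boundary `∂_G(A)`. -/
def cutEdges {V : Type*} (G : SimpleGraph V) (A : Set V) : Set (Sym2 V) :=
  {e | e ∈ G.edgeSet ∧ ∃ u v, e = s(u, v) ∧ u ∈ A ∧ v ∉ A}

/-- `G` is `c`-edge-connected: every cut of `G` has at least `c` edges.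
(In particular a one-vertex graph is `c`-edge-connected.) -/
def IsCEdgeConn {V : Type*} (G : SimpleGraph V) (c : ℕ) : Prop :=
  ∀ A : Set V, A.Nonempty → Aᶜ.Nonempty → c ≤ (cutEdges G A).ncard

/-- `C` is (the vertex set of) a `c`-edge-connected component of `G`:
a maximal set of vertices whose induced subgraph is `c`-edge-connected. -/
def IsCComp {V : Type*} (G : SimpleGraph V) (c : ℕ) (C : Set V) : Prop :=
  C.Nonempty ∧ IsCEdgeConn (G.induce C) c ∧
    ∀ D : Set V, C ⊆ D → IsCEdgeConn (G.induce D) c → D = C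

/-- `u` and `v` are `c`-edge-connected in `G`: there exist `c` pairwise
edge-disjoint paths from `u` to `v`. -/
def CEdgeConnPair {V : Type*} (G : SimpleGraph V) (c : ℕ) (u v : V) : Prop :=
  ∃ P : Fin c → G.Walk u v, (∀ i, (P i).IsPath) ∧
    ∀ i j : Fin c, i ≠ j → ∀ e ∈ (P i).edges, e ∉ (P j).edges

/-- the number of edges joining distinct `c`-edge-connected components
of `G` is at most `(c-1)(q_c - 1)`, where `q_c` is the number of `c`-edge-connected
components of `G`. -/

def crossE {V : Type*} (G : SimpleGraph V) (S T : Set V) : Set (Sym2 V) :=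
  {e | e ∈ G.edgeSet ∧ ∃ u v, e = s(u, v) ∧ u ∈ S ∧ v ∈ T}

lemma crossE_mono {V : Type*} (G : SimpleGraph V) {S S' T T' : Set V}
    (hS : S ⊆ S') (hT : T ⊆ T') : crossE G S T ⊆ crossE G S' T' := by
  rintro e ⟨he, u, v, rfl, hu, hv⟩
  exact ⟨he, u, v, rfl, hS hu, hT hv⟩

lemma image_cutEdges {V : Type*} (G : SimpleGraph V) (W : Set V) (A : Set ↥W) :
    Sym2.map (Subtype.val : ↥W → V) '' cutEdges (G.induce W) A
      = crossE G (Subtype.val '' A) (Subtype.val '' Aᶜ) := by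
  ext e
  constructor
  · rintro ⟨e', ⟨he, u, v, rfl, hu, hv⟩, rfl⟩
    refine ⟨by simpa using he, ↑u, ↑v, by simp, ⟨u, hu, rfl⟩, ⟨v, hv, rfl⟩⟩
  · rintro ⟨he, x, y, rfl, ⟨u, hu, rfl⟩, ⟨v, hv, rfl⟩⟩
    exact ⟨s(u, v), ⟨by simpa using he, u, v, rfl, hu, hv⟩, by simp⟩

lemma ncard_cutEdges_eq {V : Type*} (G : SimpleGraph V) (W : Set V) (A : Set ↥W) :
    (crossE G (Subtype.val '' A) (Subtype.val '' Aᶜ)).ncard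
      = (cutEdges (G.induce W) A).ncard := by
  rw [← image_cutEdges, Set.ncard_image_of_injective _ (Sym2.map.injective Subtype.val_injective)]

lemma mem_S_or_T {V : Type*} {W : Set V} (A : Set ↥W) {w : V} (hw : w ∈ W) :
    w ∈ (Subtype.val : ↥W → V) '' A ∨ w ∈ (Subtype.val : ↥W → V) '' Aᶜ := by
  by_cases h : (⟨w, hw⟩ : ↥W) ∈ A
  · exact Or.inl ⟨⟨w, hw⟩, h, rfl⟩
  · exact Or.inr ⟨⟨w, hw⟩, h, rfl⟩

lemma comp_side {V : Type*} [Fintype V] {G : SimpleGraph V} {c : ℕ}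
    {W : Set V} {A : Set ↥W} {C : Set V} (hCW : C ⊆ W)
    (hC : IsCEdgeConn (G.induce C) c)
    (hcut : (cutEdges (G.induce W) A).ncard < c) :
    C ⊆ Subtype.val '' A ∨ C ⊆ Subtype.val '' Aᶜ := by
  set S := (Subtype.val : ↥W → V) '' A with hSdef
  set T := (Subtype.val : ↥W → V) '' Aᶜ with hTdef
  by_contra hcon
  push_neg at hcon
  obtain ⟨h1', h2'⟩ := hcon
  rw [Set.not_subset] at h1' h2'
  obtain ⟨x, hxC, hxS⟩ := h1'
  obtain ⟨y, hyC, hyT⟩ := h2'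
  have hxT : x ∈ T := (mem_S_or_T A (hCW hxC)).resolve_left hxS
  have hyS : y ∈ S := (mem_S_or_T A (hCW hyC)).resolve_right hyT
  set A'' : Set ↥C := {z | (z : V) ∈ S} with hA''
  have h1 : c ≤ (cutEdges (G.induce C) A'').ncard :=
    hC A'' ⟨⟨y, hyC⟩, hyS⟩ ⟨⟨x, hxC⟩, hxS⟩
  have h2 : (Subtype.val : ↥C → V) '' A'' ⊆ S := by rintro _ ⟨z, hz, rfl⟩; exact hz
  have h3 : (Subtype.val : ↥C → V) '' A''ᶜ ⊆ T := by
    rintro _ ⟨z, hz, rfl⟩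
    exact (mem_S_or_T A (hCW z.2)).resolve_left hz
  have h4 : (cutEdges (G.induce C) A'').ncard ≤ (cutEdges (G.induce W) A).ncard := by
    rw [← ncard_cutEdges_eq, ← ncard_cutEdges_eq]
    exact Set.ncard_le_ncard (crossE_mono G h2 h3) (Set.toFinite _)
  omega

lemma aux_small {V : Type*} [Fintype V] {G : SimpleGraph V} {P : Set (Set V)}
    (hP1 : P.ncard ≤ 1) :
    {e ∈ G.edgeSet | (∀ x ∈ e, x ∈ ⋃₀ P) ∧ ¬ ∃ C ∈ P, ∀ x ∈ e, x ∈ C} = ∅ := by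
  ext e
  simp only [Set.mem_setOf_eq, Set.mem_empty_iff_false, iff_false]
  rintro ⟨hedge, hW, hno⟩
  induction e using Sym2.ind with
  | _ u v =>
    obtain ⟨C, hC, huC⟩ := hW u (Sym2.mem_mk_left u v)
    obtain ⟨C', hC', hvC'⟩ := hW v (Sym2.mem_mk_right u v)
    have : C = C' := (Set.ncard_le_one (Set.toFinite _)).mp hP1 C hC C' hC'
    refine hno ⟨C, hC, fun x hx => ?_⟩
    rcases Sym2.mem_iff.mp hx with rfl | rfl
    · exact huC
    · exact this ▸ hvC'

lemma aux_main {V : Type*} [Fintype V] (c : ℕ) (hc : 0 < c) (G : SimpleGraph V) :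
    ∀ n (P : Set (Set V)), P.ncard ≤ n → (∀ C ∈ P, IsCComp G c C) →
    {e ∈ G.edgeSet | (∀ x ∈ e, x ∈ ⋃₀ P) ∧ ¬ ∃ C ∈ P, ∀ x ∈ e, x ∈ C}.ncard
      ≤ (c - 1) * (P.ncard - 1) := by
  intro n
  induction n with
  | zero =>
    intro P hPn _
    rw [aux_small (by omega)]
    simp
  | succ n ih =>
    intro P hPn hP
    by_cases hP1 : P.ncard ≤ 1
    · rw [aux_small hP1]; simp
    push_neg at hP1
    obtain ⟨C₀, hC₀, C₁, hC₁, hne⟩ := (Set.one_lt_ncard (Set.toFinite _)).mp hP1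
    set W := ⋃₀ P with hW
    have hWnot : ¬ IsCEdgeConn (G.induce W) c := by
      intro h
      have h1 := (hP C₀ hC₀).2.2 W (Set.subset_sUnion_of_mem hC₀) h
      have h2 := (hP C₁ hC₁).2.2 W (Set.subset_sUnion_of_mem hC₁) h
      exact hne (h1.symm.trans h2)
    rw [IsCEdgeConn] at hWnot
    push_neg at hWnot
    obtain ⟨A, hAne, hAcne, hcut⟩ := hWnot
    set S := (Subtype.val : ↥W → V) '' A with hSdef
    set T := (Subtype.val : ↥W → V) '' Aᶜ with hTdef
    have hSW : S ⊆ W := by rintro _ ⟨z, _, rfl⟩; exact z.2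
    have hTW : T ⊆ W := by rintro _ ⟨z, _, rfl⟩; exact z.2
    have hSTdisj : ∀ x, x ∈ S → x ∈ T → False := by
      rintro _ ⟨a, ha, rfl⟩ ⟨b, hb, hab⟩
      exact hb (Subtype.ext hab ▸ ha)
    have hside : ∀ D ∈ P, D ⊆ S ∨ D ⊆ T := fun D hD =>
      comp_side (Set.subset_sUnion_of_mem hD) (hP D hD).2.1 hcut
    set PA := {D ∈ P | D ⊆ S} with hPAdef
    set PB := {D ∈ P | D ⊆ T} with hPBdef
    have hUA : ⋃₀ PA = S := by
      apply subset_antisymm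
      · exact Set.sUnion_subset fun D hD => hD.2
      · intro x hx
        obtain ⟨D, hD, hxD⟩ := hSW hx
        rcases hside D hD with h | h
        · exact ⟨D, ⟨hD, h⟩, hxD⟩
        · exact absurd (h hxD) (fun ht => hSTdisj x hx ht)
    have hUB : ⋃₀ PB = T := by
      apply subset_antisymm
      · exact Set.sUnion_subset fun D hD => hD.2
      · intro x hx
        obtain ⟨D, hD, hxD⟩ := hTW hx
        rcases hside D hD with h | h
        · exact absurd (h hxD) (fun ht => hSTdisj x ht hx)
        · exact ⟨D, ⟨hD, h⟩, hxD⟩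
    have hPAB : P = PA ∪ PB := by
      ext D
      constructor
      · intro hD
        rcases hside D hD with h | h
        · exact Or.inl ⟨hD, h⟩
        · exact Or.inr ⟨hD, h⟩
      · rintro (h | h) <;> exact h.1
    have hdisj : Disjoint PA PB := by
      rw [Set.disjoint_left]
      rintro D ⟨hD, hDS⟩ ⟨_, hDT⟩
      obtain ⟨x, hx⟩ := (hP D hD).1
      exact hSTdisj x (hDS hx) (hDT hx)
    have hcard : PA.ncard + PB.ncard = P.ncard := by
      rw [hPAB, Set.ncard_union_eq hdisj (Set.toFinite _) (Set.toFinite _)]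
    have hPApos : 0 < PA.ncard := by
      rw [Set.ncard_pos (Set.toFinite _)]
      obtain ⟨a, ha⟩ := hAne
      have : (a : V) ∈ ⋃₀ PA := hUA ▸ ⟨a, ha, rfl⟩
      obtain ⟨D, hD, _⟩ := this
      exact ⟨D, hD⟩
    have hPBpos : 0 < PB.ncard := by
      rw [Set.ncard_pos (Set.toFinite _)]
      obtain ⟨a, ha⟩ := hAcne
      have : (a : V) ∈ ⋃₀ PB := hUB ▸ ⟨a, ha, rfl⟩
      obtain ⟨D, hD, _⟩ := this
      exact ⟨D, hD⟩
    have hIHA := ih PA (by omega) (fun D hD => hP D hD.1)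
    have hIHB := ih PB (by omega) (fun D hD => hP D hD.1)
    have hcross : (crossE G S T).ncard ≤ c - 1 := by
      rw [hSdef, hTdef, ncard_cutEdges_eq]
      omega
    set EW := {e ∈ G.edgeSet | (∀ x ∈ e, x ∈ ⋃₀ P) ∧ ¬ ∃ C ∈ P, ∀ x ∈ e, x ∈ C} with hEW
    set EA := {e ∈ G.edgeSet | (∀ x ∈ e, x ∈ ⋃₀ PA) ∧ ¬ ∃ C ∈ PA, ∀ x ∈ e, x ∈ C} with hEA
    set EB := {e ∈ G.edgeSet | (∀ x ∈ e, x ∈ ⋃₀ PB) ∧ ¬ ∃ C ∈ PB, ∀ x ∈ e, x ∈ C} with hEB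
    have hsub : EW ⊆ EA ∪ EB ∪ crossE G S T := by
      intro e he
      induction e using Sym2.ind with
      | _ u v =>
        obtain ⟨hedge, hEnds, hno⟩ := he
        have hu : u ∈ W := hEnds u (Sym2.mem_mk_left u v)
        have hv : v ∈ W := hEnds v (Sym2.mem_mk_right u v)
        have hmemA : ∀ {D : Set V}, D ∈ PA → (∀ x ∈ s(u,v), x ∈ D) → False :=
          fun hD hall => hno ⟨_, hD.1, hall⟩
        have hmemB : ∀ {D : Set V}, D ∈ PB → (∀ x ∈ s(u,v), x ∈ D) → False :=
          fun hD hall => hno ⟨_, hD.1, hall⟩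
        rcases mem_S_or_T A hu with huS | huT <;> rcases mem_S_or_T A hv with hvS | hvT
        · refine Or.inl (Or.inl ⟨hedge, fun x hx => ?_, fun ⟨D, hD, hall⟩ => hmemA hD hall⟩)
          rw [hUA]
          rcases Sym2.mem_iff.mp hx with rfl | rfl
          · exact huS
          · exact hvS
        · exact Or.inr ⟨hedge, u, v, rfl, huS, hvT⟩
        · exact Or.inr ⟨hedge, v, u, Sym2.eq_swap, hvS, huT⟩
        · refine Or.inl (Or.inr ⟨hedge, fun x hx => ?_, fun ⟨D, hD, hall⟩ => hmemB hD hall⟩)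
          rw [hUB]
          rcases Sym2.mem_iff.mp hx with rfl | rfl
          · exact huT
          · exact hvT
    have hstep1 : EW.ncard ≤ EA.ncard + EB.ncard + (crossE G S T).ncard := by
      calc EW.ncard ≤ (EA ∪ EB ∪ crossE G S T).ncard :=
            Set.ncard_le_ncard hsub (Set.toFinite _)
        _ ≤ (EA ∪ EB).ncard + (crossE G S T).ncard := Set.ncard_union_le _ _
        _ ≤ EA.ncard + EB.ncard + (crossE G S T).ncard := by
            have := Set.ncard_union_le EA EB
            omega
    have harith : (c - 1) * (PA.ncard - 1) + (c - 1) * (PB.ncard - 1) + (c - 1)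
        = (c - 1) * (P.ncard - 1) := by
      have h : (PA.ncard - 1) + (PB.ncard - 1) + 1 = P.ncard - 1 := by omega
      calc (c - 1) * (PA.ncard - 1) + (c - 1) * (PB.ncard - 1) + (c - 1)
          = (c - 1) * ((PA.ncard - 1) + (PB.ncard - 1) + 1) := by ring
        _ = (c - 1) * (P.ncard - 1) := by rw [h]
    omega


lemma singleton_cec {V : Type*} (G : SimpleGraph V) (c : ℕ) (v : V) :
    IsCEdgeConn (G.induce {v}) c := by
  rintro A ⟨a, ha⟩ ⟨b, hb⟩
  exact absurd (Subtype.ext (a.2.trans b.2.symm) ▸ ha) hb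

lemma exists_comp {V : Type*} [Fintype V] (G : SimpleGraph V) (c : ℕ) (v : V) :
    ∃ C, IsCComp G c C ∧ v ∈ C := by
  classical
  obtain ⟨C, hC, hmax⟩ := Set.Finite.exists_maximalFor id
    {D : Set V | v ∈ D ∧ IsCEdgeConn (G.induce D) c} (Set.toFinite _)
    ⟨{v}, rfl, singleton_cec G c v⟩
  exact ⟨C, ⟨⟨v, hC.1⟩, hC.2, fun D hCD hD => Set.Subset.antisymm (hmax ⟨hCD hC.1, hD⟩ hCD) hCD⟩, hC.1⟩

theorem stmt1 {V : Type*} [Fintype V] (c : ℕ) (hc : 0 < c) (G : SimpleGraph V) :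
    {e ∈ G.edgeSet | ¬ ∃ C : Set V, IsCComp G c C ∧ ∀ x ∈ e, x ∈ C}.ncard ≤
      (c - 1) * ({C : Set V | IsCComp G c C}.ncard - 1) := by
  classical
  set P := {C : Set V | IsCComp G c C} with hPdef
  have hcover : ∀ x : V, x ∈ ⋃₀ P := by
    intro x
    obtain ⟨C, hC, hxC⟩ := exists_comp G c x
    exact ⟨C, hC, hxC⟩
  have hEq : {e ∈ G.edgeSet | ¬ ∃ C : Set V, IsCComp G c C ∧ ∀ x ∈ e, x ∈ C}
      = {e ∈ G.edgeSet | (∀ x ∈ e, x ∈ ⋃₀ P) ∧ ¬ ∃ C ∈ P, ∀ x ∈ e, x ∈ C} := by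
    ext e
    simp only [Set.mem_setOf_eq]
    constructor
    · rintro ⟨he, hno⟩
      exact ⟨he, fun x _ => hcover x, fun ⟨C, hC, hall⟩ => hno ⟨C, hC, hall⟩⟩
    · rintro ⟨he, _, hno⟩
      exact ⟨he, fun ⟨C, hC, hall⟩ => hno ⟨C, hC, hall⟩⟩
  rw [hEq]
  exact aux_main c hc G P.ncard P le_rfl (fun C hC => hC)
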